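/- The full subcategory of endofunctors on Set preserving finite intersections is reflective: for every endofunctor H on Set there is a natural transformation r : H → H̄ into an intersection-preserving functor H̄ such that every natural transformation s : H → K into an intersection-preserving K factors uniquely through r. -/

import Mathlib

/-- A functor on the category of sets. -/
structure SetFunctor where
  obj : Type → Type
  map : ∀ {X Y : Type}, (X → Y) → obj X → obj Y
  map_id : ∀ (X : Type), map (id : X → X) = id
  map_comp : ∀ {X Y Z : Type} (f : X → Y) (g : Y → Z), map (g ∘ f) = map g ∘ map f

/-- A monad on the category of sets. -/
structure SetMonad extends SetFunctor where
  unit : ∀ (X : Type), X → obj X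
  mult : ∀ (X : Type), obj (obj X) → obj X
  unit_natural : ∀ {X Y : Type} (f : X → Y) (x : X), map f (unit X x) = unit Y (f x)
  mult_natural : ∀ {X Y : Type} (f : X → Y) (p : obj (obj X)),
      map f (mult X p) = mult Y (map (map f) p)
  left_unit : ∀ (X : Type) (p : obj X), mult X (unit (obj X) p) = p
  right_unit : ∀ (X : Type) (p : obj X), mult X (map (unit X) p) = p
  assoc : ∀ (X : Type) (p : obj (obj (obj X))),
      mult X (mult (obj X) p) = mult X (map (mult X) p)

/-- `F` preserves finite intersections: the pullback of any pair of injections is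
sent to a pullback. -/
def PreservesFiniteIntersections (F : SetFunctor) : Prop :=
  ∀ (X A B : Type) (f : A → X) (g : B → X),
    Function.Injective f → Function.Injective g →
    ∀ (u : F.obj A) (v : F.obj B), F.map f u = F.map g v →
      ∃! w : F.obj {p : A × B // f p.1 = g p.2},
        F.map (fun p : {p : A × B // f p.1 = g p.2} => p.1.1) w = u ∧
        F.map (fun p : {p : A × B // f p.1 = g p.2} => p.1.2) w = v

namespace TrnkovaAux

theorem map_comp' (H : SetFunctor) {X Y Z : Type} (f : X → Y) (g : Y → Z) (x : H.obj X) :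
    H.map g (H.map f x) = H.map (g ∘ f) x := by
  rw [H.map_comp]; rfl

theorem map_id' (H : SetFunctor) {X : Type} (x : H.obj X) : H.map id x = x := by
  rw [H.map_id]; rfl

theorem funext_empty {X Z : Type} (hX : IsEmpty X) (f g : X → Z) : f = g :=
  funext fun x => (hX.false x).elim

theorem map_congr (H : SetFunctor) {X Z : Type} {f g : X → Z} (h : f = g) (x : H.obj X) :
    H.map f x = H.map g x := by rw [h]

theorem map_inj (H : SetFunctor) {A X : Type} {f : A → X} (hf : Function.Injective f)
    (hA : Nonempty A) : Function.Injective (H.map f) := by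
  haveI := hA
  obtain ⟨g, hg⟩ := hf.hasLeftInverse
  intro u v huv
  have h2 := congrArg (H.map g) huv
  rw [map_comp', map_comp', show g ∘ f = id from funext hg] at h2
  rw [H.map_id] at h2
  exact h2

def EObj (H : SetFunctor) : Type :=
  {u : H.obj Unit // H.map (fun _ => true) u = H.map (fun _ => false) u}

theorem constancy (H : SetFunctor) {Z : Type} (e : EObj H) (g g' : Unit → Z) :
    H.map g e.1 = H.map g' e.1 := by
  have h1 : g = (fun b : Bool => cond b (g ()) (g' ())) ∘ (fun _ => true) := by
    funext u; cases u; rfl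
  have h2 : g' = (fun b : Bool => cond b (g ()) (g' ())) ∘ (fun _ => false) := by
    funext u; cases u; rfl
  calc H.map g e.1
      = H.map (fun b : Bool => cond b (g ()) (g' ())) (H.map (fun _ => true) e.1) := by
          rw [map_comp']; exact map_congr H h1 _
    _ = H.map (fun b : Bool => cond b (g ()) (g' ())) (H.map (fun _ => false) e.1) := by
          rw [e.2]
    _ = H.map g' e.1 := by rw [map_comp']; exact (map_congr H h2 _).symm

def toE (H : SetFunctor) {X : Type} (hX : IsEmpty X) (x : H.obj X) : EObj H :=
  ⟨H.map (fun _ => ()) x, by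
    rw [map_comp', map_comp']
    exact map_congr H (funext_empty hX _ _) x⟩

open Classical in
noncomputable def Cl (H : SetFunctor) : SetFunctor where
  obj X := (Nonempty X → H.obj X) × (IsEmpty X → EObj H)
  map {X Y} g p :=
    ⟨fun hY =>
        if hX : Nonempty X then H.map g (p.1 hX)
        else H.map (fun _ => Classical.choice hY) (p.2 (not_nonempty_iff.mp hX)).1,
     fun hY => p.2 ⟨fun x => hY.false (g x)⟩⟩
  map_id X := by
    funext p
    refine Prod.ext ?_ ?_
    · funext hY
      simp only [dif_pos hY, map_id']
      exact congrArg p.1 (Subsingleton.elim _ _)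
    · funext hY
      exact congrArg p.2 (Subsingleton.elim _ _)
  map_comp {X Y Z} f g := by
    funext p
    refine Prod.ext ?_ ?_
    · funext hZ
      by_cases hX : Nonempty X
      · have hY : Nonempty Y := hX.map f
        simp only [dif_pos hX, dif_pos hY, Function.comp_apply]
        rw [map_comp']
      · by_cases hY : Nonempty Y
        · simp only [dif_neg hX, dif_pos hY, Function.comp_apply]
          rw [map_comp']
          exact (congrArg (fun h => H.map (fun _ => Classical.choice hZ) (p.2 h).1)
              (Subsingleton.elim _ _)).trans
            (constancy H (p.2 _) (fun _ => Classical.choice hZ)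
              (g ∘ fun _ => Classical.choice hY))
        · simp only [dif_neg hX, dif_neg hY, Function.comp_apply]
    · funext hZ
      exact congrArg p.2 (Subsingleton.elim _ _)

theorem Cl_ext (H : SetFunctor) {X : Type} {p q : (Cl H).obj X}
    (h1 : p.1 = q.1) (h2 : p.2 = q.2) : p = q := Prod.ext h1 h2

theorem Cl_ext_pos (H : SetFunctor) {X : Type} (hX : Nonempty X) {p q : (Cl H).obj X}
    (h : p.1 hX = q.1 hX) : p = q := by
  refine Cl_ext H ?_ ?_
  · funext h'
    rw [Subsingleton.elim h' hX]; exact h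
  · funext h'
    exact (h'.false (Classical.choice hX)).elim

theorem Cl_ext_neg (H : SetFunctor) {X : Type} (hX : IsEmpty X) {p q : (Cl H).obj X}
    (h : p.2 hX = q.2 hX) : p = q := by
  refine Cl_ext H ?_ ?_
  · funext h'
    exact (hX.false (Classical.choice h')).elim
  · funext h'
    rw [Subsingleton.elim h' hX]; exact h

open Classical in
theorem Cl_map_fst_pos (H : SetFunctor) {X Y : Type} (g : X → Y) (p : (Cl H).obj X)
    (hX : Nonempty X) (hY : Nonempty Y) :
    ((Cl H).map g p).1 hY = H.map g (p.1 hX) := by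
  show (if hX' : Nonempty X then H.map g (p.1 hX')
        else H.map (fun _ => Classical.choice hY) (p.2 (not_nonempty_iff.mp hX')).1) = _
  rw [dif_pos hX]

open Classical in
theorem Cl_map_fst_neg (H : SetFunctor) {X Y : Type} (g : X → Y) (p : (Cl H).obj X)
    (hX : IsEmpty X) (hY : Nonempty Y) :
    ((Cl H).map g p).1 hY = H.map (fun _ => Classical.choice hY) (p.2 hX).1 := by
  show (if hX' : Nonempty X then H.map g (p.1 hX')
        else H.map (fun _ => Classical.choice hY) (p.2 (not_nonempty_iff.mp hX')).1) = _
  rw [dif_neg (not_nonempty_iff.mpr hX)]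

theorem Cl_map_snd (H : SetFunctor) {X Y : Type} (g : X → Y) (p : (Cl H).obj X)
    (hY : IsEmpty Y) (hX : IsEmpty X) :
    ((Cl H).map g p).2 hY = p.2 hX :=
  congrArg p.2 (Subsingleton.elim _ _)

noncomputable def unit (H : SetFunctor) (X : Type) (x : H.obj X) : (Cl H).obj X :=
  ⟨fun _ => x, fun hX => toE H hX x⟩

theorem unit_natural (H : SetFunctor) {X Y : Type} (f : X → Y) (x : H.obj X) :
    unit H Y (H.map f x) = (Cl H).map f (unit H X x) := by
  by_cases hY : Nonempty Y
  · refine Cl_ext_pos H hY ?_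
    by_cases hX : Nonempty X
    · rw [Cl_map_fst_pos H f _ hX hY]; rfl
    · rw [Cl_map_fst_neg H f _ (not_nonempty_iff.mp hX) hY]
      show H.map f x = H.map (fun _ => Classical.choice hY) (H.map (fun _ => ()) x)
      rw [map_comp']
      exact map_congr H (funext_empty (not_nonempty_iff.mp hX) _ _) x
  · have hY' : IsEmpty Y := not_nonempty_iff.mp hY
    have hX' : IsEmpty X := ⟨fun x => hY'.false (f x)⟩
    refine Cl_ext_neg H hY' ?_
    rw [Cl_map_snd H f _ hY' hX']
    show toE H hY' (H.map f x) = toE H hX' x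
    refine Subtype.ext ?_
    show H.map (fun _ => ()) (H.map f x) = H.map (fun _ => ()) x
    rw [map_comp']

theorem unit_eq (H : SetFunctor) {X : Type} (hX : Nonempty X) (p : (Cl H).obj X) :
    p = unit H X (p.1 hX) :=
  Cl_ext_pos H hX rfl

section Pullback

variable {X A B : Type} (f : A → X) (g : B → X)

/-- Trnková's lemma: every set functor preserves nonempty finite intersections. -/
theorem preserves_nonempty (H : SetFunctor) (hf : Function.Injective f)
    (hg : Function.Injective g) (p₀ : {p : A × B // f p.1 = g p.2})
    (u : H.obj A) (v : H.obj B) (huv : H.map f u = H.map g v) :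
    ∃! w : H.obj {p : A × B // f p.1 = g p.2},
      H.map (fun p : {p : A × B // f p.1 = g p.2} => p.1.1) w = u ∧
      H.map (fun p : {p : A × B // f p.1 = g p.2} => p.1.2) w = v := by
  classical
  set Pb := {p : A × B // f p.1 = g p.2} with hPb
  have hA : Nonempty A := ⟨p₀.1.1⟩
  have hB : Nonempty B := ⟨p₀.1.2⟩
  have hP : Nonempty Pb := ⟨p₀⟩
  have hpi1 : Function.Injective (fun p : Pb => p.1.1) := by
    intro p q h
    have h2 : g p.1.2 = g q.1.2 := by rw [← p.2, ← q.2]; exact congrArg f h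
    exact Subtype.ext (Prod.ext h (hg h2))
  set sA : A → Pb := fun a =>
    if h : ∃ b, g b = f a then ⟨(a, h.choose), h.choose_spec.symm⟩ else p₀ with hsA
  set m : X → X := fun x => if h : ∃ b, g b = x then x else g p₀.1.2 with hm
  have hmg : m ∘ g = g := by
    funext b; show m (g b) = g b
    rw [hm]; exact dif_pos ⟨b, rfl⟩
  have hmf1 : m ∘ f = f ∘ (fun p : Pb => p.1.1) ∘ sA := by
    funext a
    show m (f a) = f ((sA a).1.1)
    by_cases h : ∃ b, g b = f a
    · rw [hm, hsA]; simp only [dif_pos h]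
    · rw [hm, hsA]; simp only [dif_neg h]
      exact p₀.2.symm
  have hmf2 : m ∘ f = g ∘ (fun p : Pb => p.1.2) ∘ sA := by
    funext a
    show m (f a) = g ((sA a).1.2)
    by_cases h : ∃ b, g b = f a
    · rw [hm, hsA]; simp only [dif_pos h]
      exact h.choose_spec.symm
    · rw [hm, hsA]; simp only [dif_neg h]
  have hmw : H.map m (H.map f u) = H.map f u := by
    rw [huv, map_comp', hmg]
  refine ⟨H.map sA u, ⟨?_, ?_⟩, ?_⟩
  · -- first projection
    refine map_inj H hf hA ?_
    rw [map_comp', map_comp']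
    calc H.map (f ∘ (fun p : Pb => p.1.1) ∘ sA) u = H.map (m ∘ f) u := by rw [hmf1]
      _ = H.map m (H.map f u) := (map_comp' H f m u).symm
      _ = H.map f u := hmw
  · refine map_inj H hg hB ?_
    rw [map_comp', map_comp']
    calc H.map (g ∘ (fun p : Pb => p.1.2) ∘ sA) u = H.map (m ∘ f) u := by rw [hmf2]
      _ = H.map m (H.map f u) := (map_comp' H f m u).symm
      _ = H.map f u := hmw
      _ = H.map g v := huv
  · intro w' hw'
    refine map_inj H hpi1 hP ?_
    rw [hw'.1]
    refine (map_inj H hf hA ?_).symm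
    rw [map_comp', map_comp']
    calc H.map (f ∘ (fun p : Pb => p.1.1) ∘ sA) u = H.map (m ∘ f) u := by rw [hmf1]
      _ = H.map m (H.map f u) := (map_comp' H f m u).symm
      _ = H.map f u := hmw

/-- Facts about pairs of generalized elements agreeing on disjoint injective images. -/
theorem disjoint_facts (H : SetFunctor) (hf : Function.Injective f)
    (hg : Function.Injective g)
    (hdisj : ∀ (a : A) (b : B), f a ≠ g b)
    (u1 : H.obj A) (v1 : H.obj B) (key : H.map f u1 = H.map g v1) (a0 : A) (b0 : B) :
    H.map (fun _ => a0) u1 = u1 ∧ H.map (fun _ => b0) u1 = v1 ∧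
      H.map (fun _ => true) u1 = H.map (fun _ => false) u1 := by
  classical
  have fact2 : H.map (fun _ => a0) u1 = u1 := by
    set m : X → X := fun x => if h : ∃ b, g b = x then x else f a0 with hm
    have hmg : m ∘ g = g := by
      funext b; show m (g b) = g b; rw [hm]; exact dif_pos ⟨b, rfl⟩
    have hmf : m ∘ f = f ∘ (fun _ => a0) := by
      funext a; show m (f a) = f a0; rw [hm]
      exact dif_neg (fun ⟨b, hb⟩ => hdisj a b hb.symm)
    refine map_inj H hf ⟨a0⟩ ?_
    rw [map_comp']
    calc H.map (f ∘ fun _ => a0) u1 = H.map (m ∘ f) u1 := by rw [hmf]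
      _ = H.map m (H.map f u1) := (map_comp' H f m u1).symm
      _ = H.map m (H.map g v1) := by rw [key]
      _ = H.map (m ∘ g) v1 := map_comp' H g m v1
      _ = H.map g v1 := by rw [hmg]
      _ = H.map f u1 := key.symm
  have fact3 : H.map (fun _ => b0) u1 = v1 := by
    set m : X → X := fun x => if h : ∃ a, f a = x then g b0 else x with hm
    have hmg : m ∘ g = g := by
      funext b; show m (g b) = g b; rw [hm]
      exact dif_neg (fun ⟨a, ha⟩ => hdisj a b ha)
    have hmf : m ∘ f = g ∘ (fun _ => b0) := by
      funext a; show m (f a) = g b0; rw [hm]; exact dif_pos ⟨a, rfl⟩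
    refine map_inj H hg ⟨b0⟩ ?_
    rw [map_comp']
    calc H.map (g ∘ fun _ => b0) u1 = H.map (m ∘ f) u1 := by rw [hmf]
      _ = H.map m (H.map f u1) := (map_comp' H f m u1).symm
      _ = H.map m (H.map g v1) := by rw [key]
      _ = H.map (m ∘ g) v1 := map_comp' H g m v1
      _ = H.map g v1 := by rw [hmg]
  refine ⟨fact2, fact3, ?_⟩
  set χ : X → Bool := fun x => if ∃ a, f a = x then true else false with hχ
  have hχf : χ ∘ f = fun _ => true := by
    funext a; show χ (f a) = true; rw [hχ]
    exact if_pos (⟨a, rfl⟩ : ∃ a', f a' = f a)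
  have hχg : χ ∘ g = fun _ => false := by
    funext b; show χ (g b) = false; rw [hχ]
    exact if_neg (fun ⟨a, ha⟩ => hdisj a b ha)
  calc H.map (fun _ => true) u1 = H.map (χ ∘ f) u1 := by rw [hχf]
    _ = H.map χ (H.map f u1) := (map_comp' H f χ u1).symm
    _ = H.map χ (H.map g v1) := by rw [key]
    _ = H.map (χ ∘ g) v1 := map_comp' H g χ v1
    _ = H.map (fun _ => false) v1 := by rw [hχg]
    _ = H.map (fun _ => false) (H.map (fun _ => b0) u1) := by rw [fact3]
    _ = H.map ((fun _ => false) ∘ (fun (_ : A) => b0)) u1 := map_comp' H _ _ u1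
    _ = H.map (fun _ => false) u1 := rfl

end Pullback

def ofE (H : SetFunctor) {X : Type} (hX : IsEmpty X) (e : EObj H) : (Cl H).obj X :=
  ⟨fun h => (hX.false (Classical.choice h)).elim, fun _ => e⟩

theorem pt_inj {A : Type} (a : A) : Function.Injective (fun _ : Unit => a) :=
  fun x y _ => Subsingleton.elim x y

theorem E_inj (H : SetFunctor) {A : Type} (a : A) {e e' : EObj H}
    (h : H.map (fun _ : Unit => a) e.1 = H.map (fun _ : Unit => a) e'.1) : e = e' :=
  Subtype.ext (map_inj H (pt_inj a) ⟨()⟩ h)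

theorem Cl_preserves (H : SetFunctor) : PreservesFiniteIntersections (Cl H) := by
  intro X A B f g hf hg u v huv
  classical
  by_cases hX : Nonempty X
  · by_cases hP : Nonempty {p : A × B // f p.1 = g p.2}
    · -- nonempty pullback
      obtain ⟨p₀⟩ := hP
      have hP : Nonempty {p : A × B // f p.1 = g p.2} := ⟨p₀⟩
      have hA : Nonempty A := ⟨p₀.1.1⟩
      have hB : Nonempty B := ⟨p₀.1.2⟩
      have key : H.map f (u.1 hA) = H.map g (v.1 hB) := by
        have h1 := congrFun (congrArg Prod.fst huv) hX
        rwa [Cl_map_fst_pos H f u hA hX, Cl_map_fst_pos H g v hB hX] at h1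
      obtain ⟨w1, ⟨hw1, hw2⟩, hwu⟩ :=
        preserves_nonempty f g H hf hg p₀ (u.1 hA) (v.1 hB) key
      refine ⟨⟨fun _ => w1, fun h => (h.false p₀).elim⟩, ⟨?_, ?_⟩, ?_⟩
      · refine Cl_ext_pos H hA ?_
        refine (Cl_map_fst_pos H _ _ hP hA).trans ?_
        exact hw1
      · refine Cl_ext_pos H hB ?_
        refine (Cl_map_fst_pos H _ _ hP hB).trans ?_
        exact hw2
      · intro w' hw'
        refine Cl_ext_pos H hP ?_
        show w'.1 hP = w1
        refine hwu _ ⟨?_, ?_⟩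
        · have h1 := congrFun (congrArg Prod.fst hw'.1) hA
          rwa [Cl_map_fst_pos H _ w' hP hA] at h1
        · have h1 := congrFun (congrArg Prod.fst hw'.2) hB
          rwa [Cl_map_fst_pos H _ w' hP hB] at h1
    · -- empty pullback
      have hP' : IsEmpty {p : A × B // f p.1 = g p.2} := not_nonempty_iff.mp hP
      by_cases hA : Nonempty A
      · by_cases hB : Nonempty B
        · -- disjoint images, A B nonempty
          have hdisj : ∀ (a : A) (b : B), f a ≠ g b := fun a b h => hP'.false ⟨(a, b), h⟩
          have key : H.map f (u.1 hA) = H.map g (v.1 hB) := by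
            have h1 := congrFun (congrArg Prod.fst huv) hX
            rwa [Cl_map_fst_pos H f u hA hX, Cl_map_fst_pos H g v hB hX] at h1
          obtain ⟨fact2, fact3, fact1⟩ := disjoint_facts f g H hf hg hdisj
            (u.1 hA) (v.1 hB) key (Classical.choice hA) (Classical.choice hB)
          have hE : H.map (fun _ : A => true) (u.1 hA)
              = H.map (fun _ : A => false) (u.1 hA) := fact1
          set wE : EObj H := ⟨H.map (fun _ => ()) (u.1 hA), by
            rw [map_comp', map_comp']; exact hE⟩ with hwE
          have hwEA : ∀ {C : Type} (c : C),
              H.map (fun _ : Unit => c) wE.1 = H.map (fun _ : A => c) (u.1 hA) := by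
            intro C c; rw [hwE]; exact map_comp' H _ _ _
          refine ⟨ofE H hP' wE, ⟨?_, ?_⟩, ?_⟩
          · refine Cl_ext_pos H hA ?_
            rw [Cl_map_fst_neg H _ _ hP' hA]
            show H.map (fun _ => Classical.choice hA) wE.1 = u.1 hA
            rw [hwEA]; exact fact2
          · refine Cl_ext_pos H hB ?_
            rw [Cl_map_fst_neg H _ _ hP' hB]
            show H.map (fun _ => Classical.choice hB) wE.1 = v.1 hB
            rw [hwEA]; exact fact3
          · intro w' hw'
            refine Cl_ext_neg H hP' ?_
            show w'.2 hP' = wE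
            refine E_inj H (Classical.choice hA) ?_
            have h1 := congrFun (congrArg Prod.fst hw'.1) hA
            rw [Cl_map_fst_neg H _ w' hP' hA] at h1
            rw [h1, hwEA]
            exact fact2.symm
        · -- A nonempty, B empty
          have hB' : IsEmpty B := not_nonempty_iff.mp hB
          have key : H.map f (u.1 hA) = H.map (fun _ => Classical.choice hX) (v.2 hB').1 := by
            have h1 := congrFun (congrArg Prod.fst huv) hX
            rwa [Cl_map_fst_pos H f u hA hX, Cl_map_fst_neg H g v hB' hX] at h1
          have key2 : H.map (fun _ : Unit => Classical.choice hA) (v.2 hB').1 = u.1 hA := by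
            refine map_inj H hf hA ?_
            rw [map_comp']
            rw [key]
            exact constancy H (v.2 hB') _ _
          refine ⟨ofE H hP' (v.2 hB'), ⟨?_, ?_⟩, ?_⟩
          · refine Cl_ext_pos H hA ?_
            rw [Cl_map_fst_neg H _ _ hP' hA]
            exact key2
          · refine Cl_ext_neg H hB' ?_
            rw [Cl_map_snd H _ _ hB' hP']; rfl
          · intro w' hw'
            refine Cl_ext_neg H hP' ?_
            have h1 := congrFun (congrArg Prod.snd hw'.2) hB'
            rw [Cl_map_snd H _ w' hB' hP'] at h1
            exact h1
      · -- A empty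
        have hA' : IsEmpty A := not_nonempty_iff.mp hA
        by_cases hB : Nonempty B
        · -- A empty, B nonempty
          have key : H.map (fun _ => Classical.choice hX) (u.2 hA').1 = H.map g (v.1 hB) := by
            have h1 := congrFun (congrArg Prod.fst huv) hX
            rwa [Cl_map_fst_neg H f u hA' hX, Cl_map_fst_pos H g v hB hX] at h1
          have key2 : H.map (fun _ : Unit => Classical.choice hB) (u.2 hA').1 = v.1 hB := by
            refine map_inj H hg hB ?_
            rw [map_comp', ← key]
            exact (constancy H (u.2 hA') _ _).symm
          refine ⟨ofE H hP' (u.2 hA'), ⟨?_, ?_⟩, ?_⟩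
          · refine Cl_ext_neg H hA' ?_
            rw [Cl_map_snd H _ _ hA' hP']; rfl
          · refine Cl_ext_pos H hB ?_
            rw [Cl_map_fst_neg H _ _ hP' hB]
            exact key2
          · intro w' hw'
            refine Cl_ext_neg H hP' ?_
            have h1 := congrFun (congrArg Prod.snd hw'.1) hA'
            rw [Cl_map_snd H _ w' hA' hP'] at h1
            exact h1
        · -- A empty, B empty
          have hB' : IsEmpty B := not_nonempty_iff.mp hB
          have key : u.2 hA' = v.2 hB' := by
            have h1 := congrFun (congrArg Prod.fst huv) hX
            rw [Cl_map_fst_neg H f u hA' hX, Cl_map_fst_neg H g v hB' hX] at h1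
            exact E_inj H (Classical.choice hX) h1
          refine ⟨ofE H hP' (u.2 hA'), ⟨?_, ?_⟩, ?_⟩
          · refine Cl_ext_neg H hA' ?_
            rw [Cl_map_snd H _ _ hA' hP']; rfl
          · refine Cl_ext_neg H hB' ?_
            rw [Cl_map_snd H _ _ hB' hP']
            exact key
          · intro w' hw'
            refine Cl_ext_neg H hP' ?_
            have h1 := congrFun (congrArg Prod.snd hw'.1) hA'
            rw [Cl_map_snd H _ w' hA' hP'] at h1
            exact h1
  · -- X empty
    have hX' : IsEmpty X := not_nonempty_iff.mp hX
    have hA' : IsEmpty A := ⟨fun a => hX'.false (f a)⟩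
    have hB' : IsEmpty B := ⟨fun b => hX'.false (g b)⟩
    have hP' : IsEmpty {p : A × B // f p.1 = g p.2} := ⟨fun p => hA'.false p.1.1⟩
    have key : u.2 hA' = v.2 hB' := by
      have h1 := congrFun (congrArg Prod.snd huv) hX'
      rw [Cl_map_snd H f u hX' hA', Cl_map_snd H g v hX' hB'] at h1
      exact h1
    refine ⟨ofE H hP' (u.2 hA'), ⟨?_, ?_⟩, ?_⟩
    · refine Cl_ext_neg H hA' ?_
      rw [Cl_map_snd H _ _ hA' hP']; rfl
    · refine Cl_ext_neg H hB' ?_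
      rw [Cl_map_snd H _ _ hB' hP']
      exact key
    · intro w' hw'
      refine Cl_ext_neg H hP' ?_
      have h1 := congrFun (congrArg Prod.snd hw'.1) hA'
      rw [Cl_map_snd H _ w' hA' hP'] at h1
      exact h1

section Reflection

variable (K : SetFunctor) (hK : PreservesFiniteIntersections K) (H : SetFunctor)

/-- The empty pullback of the two points of `Bool`. -/
def P0 : Type :=
  {p : Unit × Unit // (fun _ : Unit => true) p.1 = (fun _ : Unit => false) p.2}

theorem hP0 : IsEmpty P0 := ⟨fun p => by simpa using p.2⟩

noncomputable def omegaOf (κ : K.obj Unit)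
    (hκ : K.map (fun _ : Unit => true) κ = K.map (fun _ : Unit => false) κ) : K.obj P0 :=
  (hK Bool Unit Unit (fun _ => true) (fun _ => false) (pt_inj true) (pt_inj false)
    κ κ hκ).choose

theorem omegaOf_spec1 (κ : K.obj Unit) (hκ : _) :
    K.map (fun p : P0 => p.1.1) (omegaOf K hK κ hκ) = κ :=
  (hK Bool Unit Unit (fun _ => true) (fun _ => false) (pt_inj true) (pt_inj false)
    κ κ hκ).choose_spec.1.1

theorem omegaOf_unique (κ : K.obj Unit) (hκ : _) (ω' : K.obj P0)
    (h1 : K.map (fun p : P0 => p.1.1) ω' = κ) (h2 : K.map (fun p : P0 => p.1.2) ω' = κ) :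
    ω' = omegaOf K hK κ hκ :=
  (hK Bool Unit Unit (fun _ => true) (fun _ => false) (pt_inj true) (pt_inj false)
    κ κ hκ).choose_spec.2 ω' ⟨h1, h2⟩

theorem omega_eq {X : Type} (hX : IsEmpty X) (κ : K.obj Unit) (hκ : _) (c : K.obj X)
    (hc : K.map (fun _ : X => ()) c = κ) :
    K.map (fun q : P0 => ((hP0.false q).elim : X)) (omegaOf K hK κ hκ) = c := by
  have h1 : omegaOf K hK κ hκ = K.map (fun x : X => ((hX.false x).elim : P0)) c := by
    refine (omegaOf_unique K hK κ hκ _ ?_ ?_).symm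
    · rw [map_comp']
      exact (map_congr K (funext fun _ => rfl) c).trans hc
    · rw [map_comp']
      exact (map_congr K (funext fun _ => rfl) c).trans hc
  rw [h1, map_comp']
  rw [show ((fun q : P0 => ((hP0.false q).elim : X)) ∘ fun x : X => ((hX.false x).elim : P0))
      = id from funext_empty hX _ _]
  exact map_id' K c

theorem sE (sf : ∀ X : Type, H.obj X → K.obj X)
    (hs : ∀ (X Y : Type) (f : X → Y) (x : H.obj X), sf Y (H.map f x) = K.map f (sf X x))
    (e : EObj H) :
    K.map (fun _ : Unit => true) (sf Unit e.1) = K.map (fun _ : Unit => false) (sf Unit e.1) :=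
  (hs Unit Bool (fun _ => true) e.1).symm.trans
    ((congrArg (sf Bool) e.2).trans (hs Unit Bool (fun _ => false) e.1))

open Classical in
noncomputable def tmap (sf : ∀ X : Type, H.obj X → K.obj X)
    (hs : ∀ (X Y : Type) (f : X → Y) (x : H.obj X), sf Y (H.map f x) = K.map f (sf X x)) :
    ∀ X : Type, (Cl H).obj X → K.obj X := fun X p =>
  if hX : Nonempty X then sf X (p.1 hX)
  else K.map (fun q : P0 => ((hP0.false q).elim : X))
    (omegaOf K hK (sf Unit (p.2 (not_nonempty_iff.mp hX)).1)
      (sE K H sf hs (p.2 (not_nonempty_iff.mp hX))))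

open Classical in
theorem tmap_pos (sf : ∀ X : Type, H.obj X → K.obj X)
    (hs : ∀ (X Y : Type) (f : X → Y) (x : H.obj X), sf Y (H.map f x) = K.map f (sf X x)) {X : Type} (hX : Nonempty X) (p : (Cl H).obj X) :
    tmap K hK H sf hs X p = sf X (p.1 hX) := by
  show (if hX' : Nonempty X then sf X (p.1 hX') else _) = _
  rw [dif_pos hX]

open Classical in
theorem tmap_neg_eq (sf : ∀ X : Type, H.obj X → K.obj X)
    (hs : ∀ (X Y : Type) (f : X → Y) (x : H.obj X), sf Y (H.map f x) = K.map f (sf X x)) {X : Type} (hX : IsEmpty X) (p : (Cl H).obj X) :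
    tmap K hK H sf hs X p
      = K.map (fun q : P0 => ((hP0.false q).elim : X))
          (omegaOf K hK (sf Unit (p.2 hX).1) (sE K H sf hs (p.2 hX))) := by
  show (if hX' : Nonempty X then sf X (p.1 hX')
    else K.map (fun q : P0 => ((hP0.false q).elim : X))
      (omegaOf K hK (sf Unit (p.2 (not_nonempty_iff.mp hX')).1)
        (sE K H sf hs (p.2 (not_nonempty_iff.mp hX'))))) = _
  rw [dif_neg (not_nonempty_iff.mpr hX)]

theorem tmap_neg (sf : ∀ X : Type, H.obj X → K.obj X)
    (hs : ∀ (X Y : Type) (f : X → Y) (x : H.obj X), sf Y (H.map f x) = K.map f (sf X x)) {X : Type} (hX : IsEmpty X) (p : (Cl H).obj X) (c : K.obj X)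
    (hc : K.map (fun _ : X => ()) c = sf Unit (p.2 hX).1) :
    tmap K hK H sf hs X p = c := by
  rw [tmap_neg_eq K hK H sf hs hX p]
  exact omega_eq K hK hX _ _ c hc

theorem tmap_natural (sf : ∀ X : Type, H.obj X → K.obj X)
    (hs : ∀ (X Y : Type) (f : X → Y) (x : H.obj X), sf Y (H.map f x) = K.map f (sf X x)) (X Y : Type) (f : X → Y) (p : (Cl H).obj X) :
    tmap K hK H sf hs Y ((Cl H).map f p) = K.map f (tmap K hK H sf hs X p) := by
  by_cases hY : Nonempty Y
  · by_cases hX : Nonempty X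
    · rw [tmap_pos K hK H sf hs hY, tmap_pos K hK H sf hs hX,
        Cl_map_fst_pos H f p hX hY, hs]
    · have hX' : IsEmpty X := not_nonempty_iff.mp hX
      rw [tmap_pos K hK H sf hs hY, Cl_map_fst_neg H f p hX' hY,
        tmap_neg_eq K hK H sf hs hX' p, hs, map_comp']
      have h2 := omegaOf_spec1 K hK (sf Unit (p.2 hX').1) (sE K H sf hs (p.2 hX'))
      calc K.map ((fun _ => Classical.choice hY) ∘ fun _ : Unit => ()) (sf Unit (p.2 hX').1)
          = K.map ((fun _ => Classical.choice hY) ∘ fun _ : Unit => ())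
              (K.map (fun p : P0 => p.1.1)
                (omegaOf K hK (sf Unit (p.2 hX').1) (sE K H sf hs (p.2 hX')))) := by
            exact congrArg _ h2.symm
        _ = K.map (((fun _ => Classical.choice hY) ∘ fun _ : Unit => ()) ∘ fun p : P0 => p.1.1)
              (omegaOf K hK (sf Unit (p.2 hX').1) (sE K H sf hs (p.2 hX'))) := map_comp' K _ _ _
        _ = _ := map_congr K (funext_empty (hP0) _ _) _
  · have hY' : IsEmpty Y := not_nonempty_iff.mp hY
    have hX' : IsEmpty X := ⟨fun x => hY'.false (f x)⟩
    rw [tmap_neg_eq K hK H sf hs hY' _, Cl_map_snd H f p hY' hX',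
      tmap_neg_eq K hK H sf hs hX' p, map_comp']
    exact map_congr K (funext_empty (hP0) _ _) _

theorem tmap_unit (sf : ∀ X : Type, H.obj X → K.obj X)
    (hs : ∀ (X Y : Type) (f : X → Y) (x : H.obj X), sf Y (H.map f x) = K.map f (sf X x)) (X : Type) (x : H.obj X) :
    tmap K hK H sf hs X (unit H X x) = sf X x := by
  by_cases hX : Nonempty X
  · rw [tmap_pos K hK H sf hs hX]
    rfl
  · have hX' : IsEmpty X := not_nonempty_iff.mp hX
    refine tmap_neg K hK H sf hs hX' _ _ ?_
    show K.map (fun _ : X => ()) (sf X x) = sf Unit (H.map (fun _ => ()) x)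
    exact (hs X Unit (fun _ => ()) x).symm

theorem Cl_map_toUnit (H : SetFunctor) {X : Type} (hX : IsEmpty X) (p : (Cl H).obj X) :
    (Cl H).map (fun _ : X => ()) p = unit H Unit (p.2 hX).1 := by
  refine Cl_ext_pos H ⟨()⟩ ?_
  rw [Cl_map_fst_neg H _ p hX ⟨()⟩]
  show H.map (fun _ => Classical.choice ⟨()⟩) (p.2 hX).1 = (p.2 hX).1
  calc H.map (fun _ => Classical.choice ⟨()⟩) (p.2 hX).1
      = H.map id (p.2 hX).1 := map_congr H (funext fun u => Subsingleton.elim _ _) _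
    _ = (p.2 hX).1 := map_id' H _

end Reflection

end TrnkovaAux

/-- The intersection-preserving set functors form a reflective subcategory: every
set functor `H` has a natural transformation `r : H → H'` into an
intersection-preserving `H'` through which every natural transformation into an
intersection-preserving functor factors uniquely. -/
theorem trnkova_closure_reflective (H : SetFunctor) :
    ∃ (H' : SetFunctor) (_ : PreservesFiniteIntersections H')
      (r : ∀ X : Type, H.obj X → H'.obj X),
      (∀ (X Y : Type) (f : X → Y) (x : H.obj X), r Y (H.map f x) = H'.map f (r X x)) ∧
      ∀ (K : SetFunctor), PreservesFiniteIntersections K →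
        ∀ s : {s : ∀ X : Type, H.obj X → K.obj X //
            ∀ (X Y : Type) (f : X → Y) (x : H.obj X), s Y (H.map f x) = K.map f (s X x)},
          ∃! t : {t : ∀ X : Type, H'.obj X → K.obj X //
              ∀ (X Y : Type) (f : X → Y) (x : H'.obj X), t Y (H'.map f x) = K.map f (t X x)},
            ∀ (X : Type) (x : H.obj X), t.1 X (r X x) = s.1 X x := by
  classical
  refine ⟨TrnkovaAux.Cl H, TrnkovaAux.Cl_preserves H, TrnkovaAux.unit H,
    fun X Y f x => TrnkovaAux.unit_natural H f x, ?_⟩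
  intro K hK s
  refine ⟨⟨TrnkovaAux.tmap K hK H s.1 s.2,
      fun X Y f p => TrnkovaAux.tmap_natural K hK H s.1 s.2 X Y f p⟩,
    fun X x => TrnkovaAux.tmap_unit K hK H s.1 s.2 X x, ?_⟩
  intro t' ht'
  refine Subtype.ext ?_
  funext X p
  show t'.1 X p = TrnkovaAux.tmap K hK H s.1 s.2 X p
  by_cases hX : Nonempty X
  · rw [TrnkovaAux.tmap_pos K hK H s.1 s.2 hX]
    have h1 := ht' X (p.1 hX)
    rw [← TrnkovaAux.unit_eq H hX p] at h1
    exact h1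
  · have hX' : IsEmpty X := not_nonempty_iff.mp hX
    refine (TrnkovaAux.tmap_neg K hK H s.1 s.2 hX' p (t'.1 X p) ?_).symm
    have h1 := t'.2 X Unit (fun _ => ()) p
    rw [TrnkovaAux.Cl_map_toUnit H hX' p] at h1
    rw [← h1]
    exact ht' Unit (p.2 hX').1
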